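/- (Comparison of dichotomies: zonotope inclusion is equivalent to domination of upper boundary functions.) Let A be a 2×n row-stochastic matrix and B a 2×m row-stochastic matrix, with zonotopes Z(A) = {Σⱼ δⱼ aⱼ : δ ∈ [0,1]ⁿ} and Z(B) = {Σⱼ εⱼ bⱼ : ε ∈ [0,1]ᵐ}. Then Z(B) ⊆ Z(A) if and only if for every x ∈ [0,1], sup{y : (x,y) ∈ Z(B)} ≤ sup{y : (x,y) ∈ Z(A)}. -/

import Mathlib

open Matrix Finset

set_option maxHeartbeats 800000

/-- A real matrix is row-stochastic if it has nonnegative entries and each row sums to 1. -/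
def RowStochastic {n m : ℕ} (A : Matrix (Fin n) (Fin m) ℝ) : Prop :=
  (∀ i j, 0 ≤ A i j) ∧ ∀ i, ∑ j, A i j = 1

/-- The zonotope of a `2 × n` matrix `A`: all combinations `∑ⱼ δⱼ aⱼ` of the columns `aⱼ`
of `A` with coefficients `δⱼ ∈ [0,1]`; equivalently the Minkowski sum of the segments
`conv(0, aⱼ)`. -/
def zonotope {n : ℕ} (A : Matrix (Fin 2) (Fin n) ℝ) : Set (Fin 2 → ℝ) :=
  {z | ∃ δ : Fin n → ℝ, (∀ j, δ j ∈ Set.Icc (0 : ℝ) 1) ∧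
    z = ∑ j : Fin n, δ j • (fun i : Fin 2 => A i j)}

namespace ZonoAux

variable {n : ℕ} {A : Matrix (Fin 2) (Fin n) ℝ}

lemma mem_zonotope_iff {z : Fin 2 → ℝ} :
    z ∈ zonotope A ↔ ∃ δ : Fin n → ℝ, (∀ j, δ j ∈ Set.Icc (0:ℝ) 1) ∧
      ∀ i, z i = ∑ j, δ j * A i j := by
  constructor
  · rintro ⟨δ, hδ, rfl⟩
    exact ⟨δ, hδ, fun i => by simp [Finset.sum_apply]⟩
  · rintro ⟨δ, hδ, hz⟩
    refine ⟨δ, hδ, funext fun i => ?_⟩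
    simp [Finset.sum_apply, hz i]

lemma coords_mem (hA : RowStochastic A) {z : Fin 2 → ℝ} (hz : z ∈ zonotope A) (i : Fin 2) :
    z i ∈ Set.Icc (0:ℝ) 1 := by
  obtain ⟨δ, hδ, hzi⟩ := mem_zonotope_iff.1 hz
  rw [hzi i]
  constructor
  · exact Finset.sum_nonneg fun j _ => mul_nonneg (hδ j).1 (hA.1 i j)
  · calc ∑ j, δ j * A i j ≤ ∑ j, A i j := by
          refine Finset.sum_le_sum fun j _ => ?_
          nlinarith [(hδ j).2, hA.1 i j]
       _ = 1 := hA.2 i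

lemma symm_mem (hA : RowStochastic A) {z : Fin 2 → ℝ} (hz : z ∈ zonotope A) :
    (fun i => 1 - z i) ∈ zonotope A := by
  obtain ⟨δ, hδ, hzi⟩ := mem_zonotope_iff.1 hz
  refine mem_zonotope_iff.2 ⟨fun j => 1 - δ j, fun j => by simp only [Set.mem_Icc]; exact ⟨by linarith [(hδ j).2], by linarith [(hδ j).1]⟩, fun i => ?_⟩
  simp only [sub_mul, one_mul, Finset.sum_sub_distrib, hA.2 i, hzi i]

lemma const_mem (hA : RowStochastic A) {x : ℝ} (hx : x ∈ Set.Icc (0:ℝ) 1) :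
    ![x, x] ∈ zonotope A := by
  refine mem_zonotope_iff.2 ⟨fun _ => x, fun _ => hx, fun i => ?_⟩
  rw [← Finset.mul_sum, hA.2 i, mul_one]
  fin_cases i <;> simp

lemma zonotope_isCompact : IsCompact (zonotope A) := by
  have : zonotope A = (fun δ : Fin n → ℝ => ∑ j : Fin n, δ j • (fun i : Fin 2 => A i j)) ''
      (Set.Icc 0 1) := by
    ext z
    simp only [zonotope, Set.mem_setOf_eq, Set.mem_image, Set.mem_Icc, Pi.le_def]
    constructor
    · rintro ⟨δ, hδ, rfl⟩
      exact ⟨δ, ⟨fun j => (hδ j).1, fun j => (hδ j).2⟩, rfl⟩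
    · rintro ⟨δ, ⟨h0, h1⟩, rfl⟩
      exact ⟨δ, fun j => ⟨h0 j, h1 j⟩, rfl⟩
  rw [this]
  refine isCompact_Icc.image ?_
  exact continuous_finset_sum _ fun j _ => (continuous_apply j).smul continuous_const

lemma zonotope_convex : Convex ℝ (zonotope A) := by
  rintro z ⟨δ, hδ, rfl⟩ w ⟨ε, hε, rfl⟩ a b ha hb hab
  refine ⟨fun j => a * δ j + b * ε j, fun j => ⟨by have := (hδ j).1; have := (hε j).1; positivity, ?_⟩, ?_⟩
  · calc a * δ j + b * ε j ≤ a * 1 + b * 1 := by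
          gcongr; exacts [(hδ j).2, (hε j).2]
       _ = 1 := by linarith
  · rw [Finset.smul_sum, Finset.smul_sum, ← Finset.sum_add_distrib]
    refine Finset.sum_congr rfl fun j _ => ?_
    simp [smul_smul, add_smul]

lemma slice_subset (hA : RowStochastic A) (x : ℝ) :
    {y : ℝ | ![x, y] ∈ zonotope A} ⊆ Set.Icc (0:ℝ) 1 := fun y hy => by
  simpa using coords_mem hA hy 1

lemma slice_isCompact (hA : RowStochastic A) (x : ℝ) :
    IsCompact {y : ℝ | ![x, y] ∈ zonotope A} := by
  have hc : Continuous fun y : ℝ => ![x, y] := by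
    refine continuous_pi fun i => ?_
    fin_cases i
    · simpa using continuous_const
    · simpa using continuous_id'
  have hclosed : IsClosed {y : ℝ | ![x, y] ∈ zonotope A} :=
    zonotope_isCompact.isClosed.preimage hc
  exact IsCompact.of_isClosed_subset isCompact_Icc hclosed (slice_subset hA x)

lemma slice_convex (x : ℝ) : Convex ℝ {y : ℝ | ![x, y] ∈ zonotope A} := by
  intro y1 h1 y2 h2 a b ha hb hab
  have := zonotope_convex h1 h2 ha hb hab
  have heq : a • ![x, y1] + b • ![x, y2] = ![x, a • y1 + b • y2] := by
    funext i
    fin_cases i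
    · simp; linear_combination x * hab
    · simp
  rw [heq] at this
  exact this

lemma slice_nonempty (hA : RowStochastic A) {x : ℝ} (hx : x ∈ Set.Icc (0:ℝ) 1) :
    {y : ℝ | ![x, y] ∈ zonotope A}.Nonempty :=
  ⟨x, const_mem hA hx⟩

lemma sSup_mem_slice (hA : RowStochastic A) {x : ℝ} (hx : x ∈ Set.Icc (0:ℝ) 1) :
    sSup {y : ℝ | ![x, y] ∈ zonotope A} ∈ {y : ℝ | ![x, y] ∈ zonotope A} :=
  (slice_isCompact hA x).sSup_mem (slice_nonempty hA hx)

end ZonoAux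

open ZonoAux in
/-- Comparison of dichotomies: zonotope inclusion is equivalent to pointwise domination of
the upper boundary functions on `[0,1]`. -/
theorem zonotope_subset_iff_upper_boundary_le
    (n m : ℕ) (A : Matrix (Fin 2) (Fin n) ℝ) (B : Matrix (Fin 2) (Fin m) ℝ)
    (hA : RowStochastic A) (hB : RowStochastic B) :
    zonotope B ⊆ zonotope A ↔
      ∀ x ∈ Set.Icc (0 : ℝ) 1,
        sSup {y : ℝ | ![x, y] ∈ zonotope B} ≤ sSup {y : ℝ | ![x, y] ∈ zonotope A} := by
  constructor
  · intro hsub x hx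
    exact csSup_le_csSup (BddAbove.mono (slice_subset hA x) bddAbove_Icc)
      (slice_nonempty hB hx) (fun y hy => hsub hy)
  · intro h z hz
    have hz0 := coords_mem hB hz 0
    have hz1 := coords_mem hB hz 1
    set x := z 0 with hxdef
    set y := z 1 with hydef
    have hzeq : z = ![x, y] := by
      funext i; fin_cases i <;> simp [hxdef, hydef]
    have hx' : (1 - x) ∈ Set.Icc (0:ℝ) 1 := by
      obtain ⟨h0, h1⟩ := hz0; constructor <;> simp <;> linarith
    have hyB : y ∈ {y : ℝ | ![x, y] ∈ zonotope B} := by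
      show ![x, y] ∈ zonotope B; rw [← hzeq]; exact hz
    have hsymB : (1 - y) ∈ {y : ℝ | ![1 - x, y] ∈ zonotope B} := by
      have := symm_mem hB hz
      have heq : (fun i => 1 - z i) = ![1 - x, 1 - y] := by
        funext i; fin_cases i <;> simp [hxdef, hydef]
      show ![1 - x, 1 - y] ∈ zonotope B
      rw [← heq]; exact this
    -- upper bounds
    have hβA := sSup_mem_slice hA hz0
    have hβA' := sSup_mem_slice hA hx'
    set βA := sSup {y : ℝ | ![x, y] ∈ zonotope A} with hβAdef
    set βA' := sSup {y : ℝ | ![1 - x, y] ∈ zonotope A} with hβA'def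
    have hyle : y ≤ βA :=
      le_trans (le_csSup (BddAbove.mono (slice_subset hB x) bddAbove_Icc) hyB) (h x hz0)
    have hyge : 1 - βA' ≤ y := by
      have h1 : 1 - y ≤ sSup {y : ℝ | ![1 - x, y] ∈ zonotope B} :=
        le_csSup (BddAbove.mono (slice_subset hB (1 - x)) bddAbove_Icc) hsymB
      have h2 := h (1 - x) hx'
      have : 1 - y ≤ βA' := le_trans h1 h2
      linarith
    -- the reflected sup is in the slice at x
    have hmem' : (1 - βA') ∈ {y : ℝ | ![x, y] ∈ zonotope A} := by
      have := symm_mem hA hβA'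
      have heq : (fun i => 1 - (![1 - x, βA'] : Fin 2 → ℝ) i) = ![x, 1 - βA'] := by
        funext i; fin_cases i <;> simp
      show ![x, 1 - βA'] ∈ zonotope A
      rw [← heq]; exact this
    have := ((slice_convex (A := A) x).ordConnected).out hmem' hβA ⟨hyge, hyle⟩
    rw [hzeq]
    exact this
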